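/- The saturated closure of the class Wide of all widened inclusions is equal to the saturated closure of the class ({0} ↪ J) □ Mono of pushout-products of 0 : Δ[0] → J with all monomorphisms of simplicial sets. -/

import Mathlib

open CategoryTheory Simplicial Opposite Limits

namespace Paper

/-! ## The simplicial set `J`, nerve of the free-living isomorphism -/

/-- The simplicial set `J`, the nerve of the free-living isomorphism `𝕀`:
its `n`-simplices are the tuples `{0,1}^(n+1)` (recorded as `Bool`-valued functions,
`false` being the vertex `0` and `true` the vertex `1`), with all simplicial
operators acting by reindexing. -/
def J : SSet.{0} where
  obj m := Fin (m.unop.len + 1) → Bool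
  map f := TypeCat.ofHom (fun a => a ∘ f.unop.toOrderHom)
  map_id _ := rfl
  map_comp _ _ := rfl

/-- The two vertices `0, 1 : Δ[0] ⟶ J` of `J`; `ptJ false` is the vertex `0` and
`ptJ true` is the vertex `1`. -/
def ptJ (b : Bool) : Δ[0] ⟶ J where
  app _ := TypeCat.ofHom (fun _ => fun _ => b)
  naturality _ _ _ := rfl

/-- The boundary `∂J = {0} ∪ {1}` of `J` (two discrete points). -/
def bJ : SSet.{0} where
  obj _ := Bool
  map _ := TypeCat.ofHom (fun b => b)
  map_id _ := rfl
  map_comp _ _ := rfl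

/-- The inclusion `∂J ↪ J`. -/
def bJIncl : bJ ⟶ J where
  app _ := TypeCat.ofHom (fun b => fun _ => b)
  naturality _ _ _ := rfl

/-! ## Binary products and pushout-products -/

/-- The (pointwise) product of two simplicial sets. -/
def sprod (X Y : SSet.{0}) : SSet.{0} where
  obj m := X.obj m × Y.obj m
  map f := TypeCat.ofHom (fun p => (X.map f p.1, Y.map f p.2))
  map_id m := by
    ext p
    · exact FunctorToTypes.map_id_apply X p.1
    · exact FunctorToTypes.map_id_apply Y p.2
  map_comp f g := by
    ext p
    · exact FunctorToTypes.map_comp_apply X f g p.1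
    · exact FunctorToTypes.map_comp_apply Y f g p.2

/-- The product of two morphisms of simplicial sets. -/
def sprodMap {X X' Y Y' : SSet.{0}} (f : X ⟶ X') (g : Y ⟶ Y') : sprod X Y ⟶ sprod X' Y' where
  app m := TypeCat.ofHom (fun p => (f.app m p.1, g.app m p.2))
  naturality m m' φ := by
    ext p
    apply Prod.ext
    · exact NatTrans.naturality_apply f φ p.1
    · exact NatTrans.naturality_apply g φ p.2

/-- The pushout-product `f □ g : (A × Z) ∪ (B × W) ⟶ B × Z` of `f : A ⟶ B` and
`g : W ⟶ Z`, the domain being presented as the pushout `(A × Z) ∪_{A × W} (B × W)`. -/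
noncomputable def pp {A B W Z : SSet.{0}} (f : A ⟶ B) (g : W ⟶ Z) :
    pushout (sprodMap (𝟙 A) g) (sprodMap f (𝟙 W)) ⟶ sprod B Z :=
  pushout.desc (sprodMap f (𝟙 Z)) (sprodMap (𝟙 B) g) rfl

/-! ## Saturated classes of morphisms -/

/-- A class of morphisms is stable under retracts if, whenever `f` is a retract of `g`
in the arrow category, membership of `g` implies membership of `f`. -/
def StableUnderRetracts (T : MorphismProperty SSet.{0}) : Prop :=
  ∀ ⦃X Y X' Y' : SSet.{0}⦄ (f : X ⟶ Y) (g : X' ⟶ Y')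
    (i : Arrow.mk f ⟶ Arrow.mk g) (r : Arrow.mk g ⟶ Arrow.mk f),
    i ≫ r = 𝟙 _ → T g → T f

/-- The inclusion functor `Set.Iio i ⥤ ι`. -/
def iioFunctor {ι : Type} [Preorder ι] (i : ι) : Set.Iio i ⥤ ι :=
  Monotone.functor (f := Subtype.val) (fun _ _ h => h)

/-- The cocone on the restriction of `F : ι ⥤ SSet` to `Set.Iio i` with apex `F.obj i`. -/
def restrictionCocone {ι : Type} [Preorder ι] (F : ι ⥤ SSet.{0}) (i : ι) :
    Cocone (iioFunctor i ⋙ F) where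
  pt := F.obj i
  ι :=
    { app := fun j => F.map (homOfLE j.2.le)
      naturality := fun j k h => by
        dsimp [iioFunctor]
        rw [← F.map_comp, Category.comp_id]
        congr 1 }

/-- A class of morphisms is stable under transfinite composition if, for every
well-ordered type `ι` and every functor `F : ι ⥤ SSet` which is continuous at limit
stages and whose successor maps `F.obj i ⟶ F.obj (i+1)` all belong to the class, and
every colimit cocone `c` on `F`, the transfinite composite `F.obj ⊥ ⟶ c.pt` belongs to
the class. -/
def StableUnderTransfiniteComposition (T : MorphismProperty SSet.{0}) : Prop :=
  ∀ (ι : Type) [LinearOrder ι] [SuccOrder ι] [OrderBot ι] [WellFoundedLT ι]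
    (F : ι ⥤ SSet.{0}),
    (∀ i : ι, ¬IsMax i → T (F.map (homOfLE (Order.le_succ i)))) →
    (∀ i : ι, Order.IsSuccLimit i → Nonempty (IsColimit (restrictionCocone F i))) →
    ∀ (c : Cocone F), IsColimit c → T (c.ι.app ⊥)

/-- A class of morphisms of simplicial sets is saturated if it is closed under
isomorphisms, pushouts, transfinite compositions, and retracts. -/
structure IsSaturated (T : MorphismProperty SSet.{0}) : Prop where
  respectsIso : T.RespectsIso
  stableUnderCobaseChange : T.IsStableUnderCobaseChange
  stableUnderRetracts : StableUnderRetracts T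
  stableUnderTransfiniteComposition : StableUnderTransfiniteComposition T

/-- The saturated closure of a class of morphisms: the smallest saturated class
containing it. -/
def satClosure (S : MorphismProperty SSet.{0}) : MorphismProperty SSet.{0} :=
  fun _ _ f => ∀ T : MorphismProperty SSet.{0}, IsSaturated T → S ≤ T → T f

/-! ## Subcomplexes -/

/-- A subcomplex of a simplicial set. -/
structure Sub (X : SSet.{0}) where
  carrier : ∀ m, Set (X.obj m)
  map_mem : ∀ ⦃m m' : SimplexCategoryᵒᵖ⦄ (f : m ⟶ m') ⦃σ : X.obj m⦄,
    σ ∈ carrier m → X.map f σ ∈ carrier m'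

/-- The simplicial set underlying a subcomplex. -/
def Sub.toSSet {X : SSet.{0}} (S : Sub X) : SSet.{0} where
  obj m := S.carrier m
  map f := TypeCat.ofHom (fun σ => ⟨X.map f σ.1, S.map_mem f σ.2⟩)
  map_id m := by
    ext σ
    exact FunctorToTypes.map_id_apply X σ.1
  map_comp f g := by
    ext σ
    exact FunctorToTypes.map_comp_apply X f g σ.1

/-- The inclusion of a subcomplex. -/
def Sub.ι {X : SSet.{0}} (S : Sub X) : S.toSSet ⟶ X where
  app m := TypeCat.ofHom (fun (σ : S.carrier m) => σ.1)
  naturality _ _ _ := rfl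

/-- Containment of subcomplexes. -/
def Sub.Le {X : SSet.{0}} (S T : Sub X) : Prop := ∀ m, S.carrier m ⊆ T.carrier m

/-- The inclusion map associated to a containment of subcomplexes. -/
def Sub.homOfLe {X : SSet.{0}} {S T : Sub X} (h : S.Le T) : S.toSSet ⟶ T.toSSet where
  app m := TypeCat.ofHom (fun (σ : S.carrier m) => ⟨σ.1, h m σ.2⟩)
  naturality _ _ _ := rfl

/-- The union of two subcomplexes. -/
def Sub.union {X : SSet.{0}} (S T : Sub X) : Sub X where
  carrier m := S.carrier m ∪ T.carrier m
  map_mem _ _ f _ h := h.imp (fun hs => S.map_mem f hs) (fun ht => T.map_mem f ht)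

/-- The intersection of two subcomplexes. -/
def Sub.inter {X : SSet.{0}} (S T : Sub X) : Sub X where
  carrier m := S.carrier m ∩ T.carrier m
  map_mem _ _ f _ h := ⟨S.map_mem f h.1, T.map_mem f h.2⟩

/-- A subcomplex `S` of `X`, viewed as a subcomplex of (the simplicial set underlying)
another subcomplex `T` of `X`. -/
def Sub.restrict {X : SSet.{0}} (T S : Sub X) : Sub T.toSSet where
  carrier m := Set.ofPred fun σ : T.carrier m => σ.1 ∈ S.carrier m
  map_mem _ _ f _ h := S.map_mem f h

/-- The (dimension zero) object of `SimplexCategoryᵒᵖ` indexing vertices. -/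
abbrev V0 : SimplexCategoryᵒᵖ := Opposite.op (SimplexCategory.mk 0)

/-- The full subcomplex of `X` on a set `ν` of vertices: the simplices all of whose
vertices lie in `ν`. -/
def fullSub (X : SSet.{0}) (ν : Set (X.obj V0)) : Sub X where
  carrier m := {σ | ∀ g : SimplexCategory.mk 0 ⟶ m.unop, X.map g.op σ ∈ ν}
  map_mem := by
    intro m m' f σ hσ g
    rw [← FunctorToTypes.map_comp_apply]
    exact hσ (g ≫ f.unop)

/-! ## Widenings and widened inclusions -/

/-- The widening `W_ν(X)` of `X` at a set `ν` of vertices: the full subcomplex of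
`J × X` on the vertex set `({0} × X₀) ∪ ({1} × ν)`. -/
def wideSub (X : SSet.{0}) (ν : Set (X.obj V0)) : Sub (sprod J X) :=
  fullSub (sprod J X) (Set.ofPred fun p : J.obj V0 × X.obj V0 => p.1 0 = true → p.2 ∈ ν)

/-- The subcomplex `{0} × X` of `J × X` (the full subcomplex on the vertices
`{0} × X₀`). -/
def zeroSlice (X : SSet.{0}) : Sub (sprod J X) :=
  fullSub (sprod J X) (Set.ofPred fun p : J.obj V0 × X.obj V0 => p.1 0 = false)

/-- For `A` a subcomplex of `Y`, the subcomplex `J × A` of `J × Y`. -/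
def Sub.prodJ {Y : SSet.{0}} (A : Sub Y) : Sub (sprod J Y) where
  carrier m := Set.ofPred fun p : J.obj m × Y.obj m => p.2 ∈ A.carrier m
  map_mem _ _ f _ h := A.map_mem f h

/-- Given a subcomplex (inclusion) `A = X ⊆ Y` and a set `ν` of vertices of `Y`, the
subcomplex `({0} × Y) ∪ W_{ν ∩ X₀}(X)` of `J × Y`: the domain of the inclusion
`X ↪ Y` widened at `ν`. -/
def widenedSub (Y : SSet.{0}) (A : Sub Y) (ν : Set (Y.obj V0)) : Sub (sprod J Y) :=
  (zeroSlice Y).union ((wideSub Y (ν ∩ A.carrier V0)).inter A.prodJ)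

lemma zeroSlice_le_wideSub (Y : SSet.{0}) (ν : Set (Y.obj V0)) :
    (zeroSlice Y).Le (wideSub Y ν) := by
  intro m σ hσ g h
  exact absurd (hσ g) (by intro h'; change _ = false at h'; rw [h'] at h; exact Bool.false_ne_true h)

lemma wideSub_mono (Y : SSet.{0}) {ν ν' : Set (Y.obj V0)} (h : ν ⊆ ν') :
    (wideSub Y ν).Le (wideSub Y ν') :=
  fun _ σ hσ g ht => h (hσ g ht)

lemma widenedSub_le (Y : SSet.{0}) (A : Sub Y) (ν : Set (Y.obj V0)) :
    (widenedSub Y A ν).Le (wideSub Y ν) := by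
  refine fun m σ hσ => Or.elim hσ (fun h => ?_) (fun h => ?_)
  · exact zeroSlice_le_wideSub Y ν m h
  · exact wideSub_mono Y Set.inter_subset_left m h.1

/-- The inclusion `X ↪ Y` widened at `ν`: the inclusion
`({0} × Y) ∪ W_{ν ∩ X₀}(X) ↪ W_ν(Y)`. -/
def widenedIncl (Y : SSet.{0}) (A : Sub Y) (ν : Set (Y.obj V0)) :
    (widenedSub Y A ν).toSSet ⟶ (wideSub Y ν).toSSet :=
  Sub.homOfLe (widenedSub_le Y A ν)

/-- `Wide`: the class of all widened inclusions. -/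
def Wide : MorphismProperty SSet.{0} := fun _ _ h =>
  ∃ (Y : SSet.{0}) (A : Sub Y) (ν : Set (Y.obj V0)),
    Arrow.mk h = Arrow.mk (widenedIncl Y A ν)

/-- `Wide^(1)`: the class of inclusions widened at a single vertex. -/
def Wide1 : MorphismProperty SSet.{0} := fun _ _ h =>
  ∃ (Y : SSet.{0}) (A : Sub Y) (v : Y.obj V0),
    Arrow.mk h = Arrow.mk (widenedIncl Y A {v})

/-! ## Narrow vertices -/

/-- A vertex `v` of `Y` is narrow if every simplex of `Y` has at most one vertex equal
to `v`. -/
def Narrow (Y : SSet.{0}) (v : Y.obj V0) : Prop :=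
  ∀ ⦃m : SimplexCategoryᵒᵖ⦄ (σ : Y.obj m) (g g' : SimplexCategory.mk 0 ⟶ m.unop),
    Y.map g.op σ = v → Y.map g'.op σ = v → g = g'

/-- `Wide_nar`: the class of inclusions widened at a narrow set of vertices. -/
def WideNar : MorphismProperty SSet.{0} := fun _ _ h =>
  ∃ (Y : SSet.{0}) (A : Sub Y) (ν : Set (Y.obj V0)),
    (∀ v ∈ ν, Narrow Y v) ∧ Arrow.mk h = Arrow.mk (widenedIncl Y A ν)

/-- `Wide_nar^(1)`: the class of inclusions widened at a single narrow vertex. -/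
def WideNar1 : MorphismProperty SSet.{0} := fun _ _ h =>
  ∃ (Y : SSet.{0}) (A : Sub Y) (v : Y.obj V0),
    Narrow Y v ∧ Arrow.mk h = Arrow.mk (widenedIncl Y A {v})

/-! ## Standard simplices, boundaries, skeleta, iso-horns -/

/-- The unique map to the terminal simplicial set `Δ[0]`. -/
def toPt (X : SSet.{0}) : X ⟶ Δ[0] where
  app m := TypeCat.ofHom (fun _ => SSet.stdSimplex.const 0 0 m)
  naturality m m' f := by
    ext x
    apply (SSet.stdSimplex.objEquiv).injective
    apply SimplexCategory.Hom.ext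
    apply OrderHom.ext
    funext j
    exact Subsingleton.elim (α := Fin 1) _ _

/-- The `i`-th vertex of the standard simplex `Δ[n]`. -/
def vrt (n : ℕ) (i : Fin (n + 1)) : Δ[n].obj V0 :=
  SSet.stdSimplex.const n i V0

/-- The boundary `∂Δ[n]`, as a subcomplex of `Δ[n]`: the simplices which are not
surjective as monotone maps. -/
def bSub (n : ℕ) : Sub Δ[n] where
  carrier m := {σ | ¬Function.Surjective (SSet.stdSimplex.asOrderHom σ)}
  map_mem _ _ f σ hσ h := hσ (Function.Surjective.of_comp h)

/-- The `k`-skeleton of `Y`, as a subcomplex: the simplices which factor through some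
simplex of dimension at most `k`. -/
def skSub (Y : SSet.{0}) (k : ℕ) : Sub Y where
  carrier m := {σ | ∃ (j : ℕ) (_ : j ≤ k) (f : m.unop ⟶ SimplexCategory.mk j)
    (τ : Y.obj (Opposite.op (SimplexCategory.mk j))), Y.map f.op τ = σ}
  map_mem := by
    rintro m m' φ σ ⟨j, hj, f, τ, rfl⟩
    exact ⟨j, hj, φ.unop ≫ f, τ, by rw [← FunctorToTypes.map_comp_apply]; rfl⟩

/-- A `k`-simplex is nondegenerate if it admits no factorization through a simplex of
strictly smaller dimension. -/
def Nondegenerate (Y : SSet.{0}) {k : ℕ} (σ : Y.obj (Opposite.op (SimplexCategory.mk k))) :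
    Prop :=
  ∀ (j : ℕ) (f : SimplexCategory.mk k ⟶ SimplexCategory.mk j)
    (τ : Y.obj (Opposite.op (SimplexCategory.mk j))), Y.map f.op τ = σ → k ≤ j

/-- The iso-horn inclusion `𝕍_i[m+1] ↪ ∇̄_i[m+1]`: the boundary inclusion
`∂Δ[m] ↪ Δ[m]` widened at the single vertex `i`, i.e. the inclusion
`({0} × Δ[m]) ∪ W_i(∂Δ[m]) ↪ W_i(Δ[m])` of the iso-horn into the isoplex. -/
def isoHornIncl (m : ℕ) (i : Fin (m + 1)) :
    (widenedSub Δ[m] (bSub m) {vrt m i}).toSSet ⟶ (wideSub Δ[m] {vrt m i}).toSSet :=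
  widenedIncl Δ[m] (bSub m) {vrt m i}

/-- `IsoHorn`: the class of all iso-horn inclusions. -/
def IsoHorn : MorphismProperty SSet.{0} := fun _ _ h =>
  ∃ (m : ℕ) (i : Fin (m + 1)), Arrow.mk h = Arrow.mk (isoHornIncl m i)

/-! ## The classes `({0} ↪ J) □ Bdry` and `({0} ↪ J) □ Mono` -/

/-- The class `({0} ↪ J) □ Bdry` of pushout-products of the vertex `0 : Δ[0] ⟶ J`
with the boundary inclusions `∂Δ[n] ↪ Δ[n]`. -/
def ppJ0Bdry : MorphismProperty SSet.{0} := fun _ _ h =>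
  ∃ n : ℕ, Arrow.mk h = Arrow.mk (pp (ptJ false) (SSet.boundary n).ι)

/-- The class `({0} ↪ J) □ Mono` of pushout-products of the vertex `0 : Δ[0] ⟶ J`
with all monomorphisms of simplicial sets. -/
def ppJ0Mono : MorphismProperty SSet.{0} := fun _ _ h =>
  ∃ (W Z : SSet.{0}) (g : W ⟶ Z), Mono g ∧ Arrow.mk h = Arrow.mk (pp (ptJ false) g)


/-! ### Auxiliary material for Statement 6 -/

lemma delta0_eq {m : SimplexCategoryᵒᵖ} (x y : Δ[0].obj m) : x = y := by
  apply (SSet.stdSimplex.objEquiv).injective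
  apply SimplexCategory.Hom.ext
  apply OrderHom.ext
  funext j
  exact Subsingleton.elim (α := Fin 1) _ _

lemma mono_app_injective {X Y : SSet.{0}} (g : X ⟶ Y) [Mono g] (m : SimplexCategoryᵒᵖ) :
    Function.Injective (g.app m) := by
  rw [← CategoryTheory.mono_iff_injective]
  infer_instance

instance widenedIncl_mono (Y : SSet.{0}) (A : Sub Y) (ν : Set (Y.obj V0)) :
    Mono (widenedIncl Y A ν) := by
  haveI : ∀ m, Mono ((widenedIncl Y A ν).app m) := fun m => by
    rw [CategoryTheory.mono_iff_injective]
    intro a b h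
    have h' := congrArg Subtype.val h
    exact Subtype.ext h'
  exact NatTrans.mono_of_mono_app _

lemma isSaturated_satClosure (S : MorphismProperty SSet.{0}) : IsSaturated (satClosure S) where
  respectsIso := MorphismProperty.RespectsIso.mk _
    (fun e f hf T hT hle => by
      haveI := hT.respectsIso
      exact MorphismProperty.RespectsIso.precomp T e.hom f (hf T hT hle))
    (fun e f hf T hT hle => by
      haveI := hT.respectsIso
      exact MorphismProperty.RespectsIso.postcomp T e.hom f (hf T hT hle))
  stableUnderCobaseChange :=
    ⟨fun sq hf T hT hle => hT.stableUnderCobaseChange.of_isPushout sq (hf T hT hle)⟩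
  stableUnderRetracts :=
    fun _ _ _ _ f g i r hir hg T hT hle => hT.stableUnderRetracts f g i r hir (hg T hT hle)
  stableUnderTransfiniteComposition :=
    fun ι _ _ _ _ F hsucc hlim c hc T hT hle =>
      hT.stableUnderTransfiniteComposition ι F (fun i hi => hsucc i hi T hT hle) hlim c hc

lemma le_satClosure (S : MorphismProperty SSet.{0}) : S ≤ satClosure S :=
  fun _ _ _ hf _ _ hle => hle _ hf

lemma satClosure_le {S T : MorphismProperty SSet.{0}} (h : S ≤ satClosure T) :
    satClosure S ≤ satClosure T :=
  fun _ _ _ hf T' hT' hle => hf T' hT' (fun _ _ g hg => h g hg T' hT' hle)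

lemma inl_pp {A B Wt Zt : SSet.{0}} (f : A ⟶ B) (g : Wt ⟶ Zt) :
    pushout.inl _ _ ≫ pp f g = sprodMap f (𝟙 Zt) := pushout.inl_desc _ _ _

lemma inr_pp {A B Wt Zt : SSet.{0}} (f : A ⟶ B) (g : Wt ⟶ Zt) :
    pushout.inr _ _ ≫ pp f g = sprodMap (𝟙 B) g := pushout.inr_desc _ _ _
/-! ### Direction 1: `Wide ≤ satClosure ppJ0Mono` -/

/-- The map `S ⟶ J × S` recording the `J`-coordinate, for `S` a subcomplex of `J × X`. -/
def topJ (X : SSet.{0}) (S : Sub (sprod J X)) : S.toSSet ⟶ sprod J S.toSSet where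
  app _ := TypeCat.ofHom (fun σ => (σ.1.1, σ))
  naturality _ _ _ := rfl

/-- The retraction `J × W_ν(Y) ⟶ W_ν(Y)` given by the `min` multiplication of `J`. -/
def retrC (Y : SSet.{0}) (ν : Set (Y.obj V0)) :
    sprod J (wideSub Y ν).toSSet ⟶ (wideSub Y ν).toSSet where
  app _ := TypeCat.ofHom (fun p => ⟨(fun i => p.1 i && p.2.1.1 i, p.2.1.2),
    fun g hg => p.2.2 g (Bool.and_eq_true_iff.mp hg).2⟩)
  naturality _ _ _ := rfl

def retrU (Y : SSet.{0}) (A : Sub Y) (ν : Set (Y.obj V0)) :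
    sprod Δ[0] (wideSub Y ν).toSSet ⟶ (widenedSub Y A ν).toSSet where
  app _ := TypeCat.ofHom (fun p => ⟨(fun _ => false, p.2.1.2), Or.inl fun _ => rfl⟩)
  naturality _ _ _ := rfl

def retrV (Y : SSet.{0}) (A : Sub Y) (ν : Set (Y.obj V0)) :
    sprod J (widenedSub Y A ν).toSSet ⟶ (widenedSub Y A ν).toSSet where
  app m := TypeCat.ofHom (fun p => ⟨(fun i => p.1 i && p.2.1.1 i, p.2.1.2), by
    rcases (p.2.2 : _ ∨ _) with hz | hw
    · refine Or.inl fun g => ?_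
      have h : p.2.1.1 (g.toOrderHom 0) = false := hz g
      show (p.1 (g.toOrderHom 0) && p.2.1.1 (g.toOrderHom 0)) = false
      rw [h, Bool.and_false]
    · exact Or.inr ⟨fun g hg => hw.1 g (Bool.and_eq_true_iff.mp hg).2, hw.2⟩⟩)
  naturality _ _ _ := rfl

lemma retr_cond (Y : SSet.{0}) (A : Sub Y) (ν : Set (Y.obj V0)) :
    sprodMap (𝟙 Δ[0]) (widenedIncl Y A ν) ≫ retrU Y A ν =
      sprodMap (ptJ false) (𝟙 _) ≫ retrV Y A ν := by
  apply NatTrans.ext; funext m; refine ConcreteCategory.hom_ext _ _ fun p => ?_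
  exact Subtype.ext rfl

lemma wide_le_sat : Wide ≤ satClosure ppJ0Mono := by
  rintro X X' h ⟨Y, A, ν, hA⟩ T hT hle
  haveI := hT.respectsIso
  rw [T.arrow_mk_iso_iff (eqToIso hA)]
  refine hT.stableUnderRetracts _ _
    (Arrow.homMk (u := topJ Y (widenedSub Y A ν) ≫ pushout.inr _ _)
      (v := topJ Y (wideSub Y ν)) ?_)
    (Arrow.homMk (u := pushout.desc (retrU Y A ν) (retrV Y A ν) (retr_cond Y A ν))
      (v := retrC Y ν) ?_)
    ?_ (hle _ ⟨_, _, widenedIncl Y A ν, inferInstance, rfl⟩)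
  · -- (topJ ≫ inr) ≫ pp = widenedIncl ≫ topJ
    show (topJ Y (widenedSub Y A ν) ≫ pushout.inr _ _) ≫ pp (ptJ false) (widenedIncl Y A ν)
        = widenedIncl Y A ν ≫ topJ Y (wideSub Y ν)
    rw [Category.assoc, inr_pp]
    apply NatTrans.ext; funext m; refine ConcreteCategory.hom_ext _ _ fun p => ?_
    rfl
  · -- desc ≫ widenedIncl = pp ≫ retrC
    show pushout.desc (retrU Y A ν) (retrV Y A ν) (retr_cond Y A ν) ≫ widenedIncl Y A ν
        = pp (ptJ false) (widenedIncl Y A ν) ≫ retrC Y ν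
    apply pushout.hom_ext
    · simp only [← Category.assoc]
      rw [pushout.inl_desc, inl_pp]
      apply NatTrans.ext; funext m; refine ConcreteCategory.hom_ext _ _ fun p => ?_
      rfl
    · simp only [← Category.assoc]
      rw [pushout.inr_desc, inr_pp]
      apply NatTrans.ext; funext m; refine ConcreteCategory.hom_ext _ _ fun p => ?_
      rfl
  · -- composite is the identity
    apply Arrow.hom_ext
    · show (topJ Y (widenedSub Y A ν) ≫ pushout.inr _ _) ≫
        pushout.desc (retrU Y A ν) (retrV Y A ν) (retr_cond Y A ν) = 𝟙 _
      rw [Category.assoc, pushout.inr_desc]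
      apply NatTrans.ext; funext m; refine ConcreteCategory.hom_ext _ _ fun p => ?_
      exact Subtype.ext (Prod.ext (funext fun i => Bool.and_self _) rfl)
    · show topJ Y (wideSub Y ν) ≫ retrC Y ν = 𝟙 _
      apply NatTrans.ext; funext m; refine ConcreteCategory.hom_ext _ _ fun p => ?_
      exact Subtype.ext (Prod.ext (funext fun i => Bool.and_self _) rfl)
/-! ### Direction 2: `ppJ0Mono ≤ satClosure Wide` -/

/-- The image of a monomorphism `g : W ⟶ Z`, as a subcomplex of `Z`. -/
def rangeSub {W Z : SSet.{0}} (g : W ⟶ Z) : Sub Z where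
  carrier m := Set.range (g.app m)
  map_mem := by
    rintro m m' f σ ⟨w, rfl⟩
    exact ⟨W.map f w, NatTrans.naturality_apply g f w⟩


/-- Abbreviation for the pushout inclusions. -/
noncomputable abbrev poInl {W Z : SSet.{0}} (g : W ⟶ Z) :
    sprod Δ[0] Z ⟶ pushout (sprodMap (𝟙 Δ[0]) g) (sprodMap (ptJ false) (𝟙 W)) :=
  pushout.inl (sprodMap (𝟙 Δ[0]) g) (sprodMap (ptJ false) (𝟙 W))

noncomputable abbrev poInr {W Z : SSet.{0}} (g : W ⟶ Z) :
    sprod J W ⟶ pushout (sprodMap (𝟙 Δ[0]) g) (sprodMap (ptJ false) (𝟙 W)) :=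
  pushout.inr (sprodMap (𝟙 Δ[0]) g) (sprodMap (ptJ false) (𝟙 W))

def descU {W Z : SSet.{0}} (g : W ⟶ Z) :
    sprod Δ[0] Z ⟶ (widenedSub Z (rangeSub g) Set.univ).toSSet where
  app _ := TypeCat.ofHom (fun p => ⟨(fun _ => false, p.2), Or.inl fun _ => rfl⟩)
  naturality _ _ _ := rfl

def descV {W Z : SSet.{0}} (g : W ⟶ Z) :
    sprod J W ⟶ (widenedSub Z (rangeSub g) Set.univ).toSSet where
  app m := TypeCat.ofHom (fun p => ⟨(p.1, g.app m p.2), Or.inr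
    ⟨fun g' _ => ⟨trivial, W.map g'.op p.2, NatTrans.naturality_apply g g'.op p.2⟩,
     p.2, rfl⟩⟩)
  naturality m m' f := by
    refine ConcreteCategory.hom_ext _ _ fun p => ?_
    have h := NatTrans.naturality_apply g f p.2
    exact Subtype.ext (Prod.ext rfl h)

lemma desc_cond {W Z : SSet.{0}} (g : W ⟶ Z) :
    sprodMap (𝟙 Δ[0]) g ≫ descU g = sprodMap (ptJ false) (𝟙 W) ≫ descV g := by
  apply NatTrans.ext; funext m; refine ConcreteCategory.hom_ext _ _ fun p => ?_
  exact Subtype.ext rfl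

/-- The comparison map from the pushout to `({0} × Z) ∪ (J × im g)`. -/
noncomputable def phi {W Z : SSet.{0}} (g : W ⟶ Z) :
    pushout (sprodMap (𝟙 Δ[0]) g) (sprodMap (ptJ false) (𝟙 W)) ⟶
      (widenedSub Z (rangeSub g) Set.univ).toSSet :=
  pushout.desc (descU g) (descV g) (desc_cond g)

lemma pocond {W Z : SSet.{0}} (g : W ⟶ Z) (m : SimplexCategoryᵒᵖ)
    (δ : Δ[0].obj m) (w : W.obj m) :
    (poInl g).app m (δ, g.app m w) = (poInr g).app m (fun _ => false, w) := by
  have h := ConcreteCategory.congr_hom (NatTrans.congr_app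
    (pushout.condition (f := sprodMap (𝟙 Δ[0]) g) (g := sprodMap (ptJ false) (𝟙 W))) m) ((δ, w) : Δ[0].obj m × W.obj m)
  exact h

lemma widened_false {W Z : SSet.{0}} (g : W ⟶ Z) {m : SimplexCategoryᵒᵖ}
    (x : (widenedSub Z (rangeSub g) Set.univ).toSSet.obj m)
    (hz : x.1.2 ∉ Set.range (g.app m)) (i : Fin (m.unop.len + 1)) : x.1.1 i = false := by
  rcases (x.2 : _ ∨ _) with h | h
  · exact h (SimplexCategory.const (SimplexCategory.mk 0) m.unop i)
  · exact absurd h.2 hz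

/-- The components of the inverse of `phi`. -/
noncomputable def psiApp {W Z : SSet.{0}} (g : W ⟶ Z) [Mono g] (m : SimplexCategoryᵒᵖ)
    (x : (widenedSub Z (rangeSub g) Set.univ).toSSet.obj m) :
    (pushout (sprodMap (𝟙 Δ[0]) g) (sprodMap (ptJ false) (𝟙 W))).obj m :=
  @dite _ (x.1.2 ∈ Set.range (g.app m)) (Classical.dec _)
    (fun hz => (poInr g).app m (x.1.1, hz.choose))
    (fun _ => (poInl g).app m (SSet.stdSimplex.const 0 0 m, x.1.2))

lemma psiApp_mem {W Z : SSet.{0}} (g : W ⟶ Z) [Mono g] (m : SimplexCategoryᵒᵖ)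
    (x : (widenedSub Z (rangeSub g) Set.univ).toSSet.obj m) (w : W.obj m)
    (hw : g.app m w = x.1.2) :
    psiApp g m x = (poInr g).app m (x.1.1, w) := by
  have hz : x.1.2 ∈ Set.range (g.app m) := ⟨w, hw⟩
  rw [psiApp, dif_pos hz]
  exact congrArg _ (Prod.ext rfl (mono_app_injective g m (hz.choose_spec.trans hw.symm)))

lemma psiApp_not_mem {W Z : SSet.{0}} (g : W ⟶ Z) [Mono g] (m : SimplexCategoryᵒᵖ)
    (x : (widenedSub Z (rangeSub g) Set.univ).toSSet.obj m)
    (hz : x.1.2 ∉ Set.range (g.app m)) :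
    psiApp g m x = (poInl g).app m (SSet.stdSimplex.const 0 0 m, x.1.2) := by
  rw [psiApp, dif_neg hz]

lemma psi_natural {W Z : SSet.{0}} (g : W ⟶ Z) [Mono g] {m m' : SimplexCategoryᵒᵖ}
    (f : m ⟶ m') (x : (widenedSub Z (rangeSub g) Set.univ).toSSet.obj m) :
    psiApp g m' ((widenedSub Z (rangeSub g) Set.univ).toSSet.map f x) =
      (pushout (sprodMap (𝟙 Δ[0]) g) (sprodMap (ptJ false) (𝟙 W))).map f (psiApp g m x) := by
  by_cases hz : x.1.2 ∈ Set.range (g.app m)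
  · obtain ⟨w, hw⟩ := hz
    rw [psiApp_mem g m x w hw,
      psiApp_mem g m' ((widenedSub Z (rangeSub g) Set.univ).toSSet.map f x) (W.map f w)
        ((NatTrans.naturality_apply g f w).trans (congrArg (Z.map f) hw))]
    exact NatTrans.naturality_apply (poInr g) f ((x.1.1, w) : J.obj m × W.obj m)
  · by_cases hz' : ((widenedSub Z (rangeSub g) Set.univ).toSSet.map f x).1.2 ∈ Set.range (g.app m')
    · obtain ⟨w', hw'⟩ := hz'
      rw [psiApp_not_mem g m x hz, psiApp_mem g m' ((widenedSub Z (rangeSub g) Set.univ).toSSet.map f x) w' hw']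
      calc (poInr g).app m' (((widenedSub Z (rangeSub g) Set.univ).toSSet.map f x).1.1, w')
          = (poInr g).app m' (fun _ => false, w') := by
            exact congrArg _ (Prod.ext (funext fun i => widened_false g x hz _) rfl)
        _ = (poInl g).app m'
              (SSet.stdSimplex.const 0 0 m', g.app m' w') := (pocond g m' _ w').symm
        _ = (poInl g).app m'
              (Δ[0].map f (SSet.stdSimplex.const 0 0 m), ((widenedSub Z (rangeSub g) Set.univ).toSSet.map f x).1.2) := by
            exact congrArg _ (Prod.ext (delta0_eq _ _) hw')
        _ = (pushout (sprodMap (𝟙 Δ[0]) g) (sprodMap (ptJ false) (𝟙 W))).map f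
              ((poInl g).app m (SSet.stdSimplex.const 0 0 m, x.1.2)) :=
            NatTrans.naturality_apply (poInl g) f ((SSet.stdSimplex.const 0 0 m, x.1.2) : Δ[0].obj m × Z.obj m)
    · rw [psiApp_not_mem g m x hz, psiApp_not_mem g m' ((widenedSub Z (rangeSub g) Set.univ).toSSet.map f x) hz']
      calc (poInl g).app m' (SSet.stdSimplex.const 0 0 m', ((widenedSub Z (rangeSub g) Set.univ).toSSet.map f x).1.2)
          = (poInl g).app m'
              (Δ[0].map f (SSet.stdSimplex.const 0 0 m), ((widenedSub Z (rangeSub g) Set.univ).toSSet.map f x).1.2) := by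
            exact congrArg _ (Prod.ext (delta0_eq _ _) rfl)
        _ = (pushout (sprodMap (𝟙 Δ[0]) g) (sprodMap (ptJ false) (𝟙 W))).map f
              ((poInl g).app m (SSet.stdSimplex.const 0 0 m, x.1.2)) :=
            NatTrans.naturality_apply (poInl g) f ((SSet.stdSimplex.const 0 0 m, x.1.2) : Δ[0].obj m × Z.obj m)

noncomputable def psi {W Z : SSet.{0}} (g : W ⟶ Z) [Mono g] :
    (widenedSub Z (rangeSub g) Set.univ).toSSet ⟶
      pushout (sprodMap (𝟙 Δ[0]) g) (sprodMap (ptJ false) (𝟙 W)) where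
  app m := TypeCat.ofHom (psiApp g m)
  naturality m m' f := by
    refine ConcreteCategory.hom_ext _ _ fun x => ?_
    exact psi_natural g f x

lemma phi_psi {W Z : SSet.{0}} (g : W ⟶ Z) [Mono g] : phi g ≫ psi g = 𝟙 _ := by
  apply pushout.hom_ext
  · rw [← Category.assoc, Category.comp_id]
    show poInl g ≫ pushout.desc (descU g) (descV g) (desc_cond g) ≫ psi g = poInl g
    rw [← Category.assoc, pushout.inl_desc]
    apply NatTrans.ext; funext m; refine ConcreteCategory.hom_ext _ _ fun p => ?_
    show psiApp g m ((descU g).app m p) = (poInl g).app m p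
    by_cases hz : p.2 ∈ Set.range (g.app m)
    · obtain ⟨w, hw⟩ := hz
      rw [psiApp_mem g m _ w hw]
      calc (poInr g).app m (((descU g).app m p).1.1, w)
          = (poInl g).app m (p.1, g.app m w) := (pocond g m p.1 w).symm
        _ = (poInl g).app m p := by rw [hw]; rfl
    · rw [psiApp_not_mem g m _ hz]
      exact congrArg _ (Prod.ext (delta0_eq _ _) rfl)
  · rw [← Category.assoc, Category.comp_id]
    show poInr g ≫ pushout.desc (descU g) (descV g) (desc_cond g) ≫ psi g = poInr g
    rw [← Category.assoc, pushout.inr_desc]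
    apply NatTrans.ext; funext m; refine ConcreteCategory.hom_ext _ _ fun p => ?_
    show psiApp g m ((descV g).app m p) = (poInr g).app m p
    rw [psiApp_mem g m _ p.2 rfl]
    rfl

lemma psi_phi {W Z : SSet.{0}} (g : W ⟶ Z) [Mono g] : psi g ≫ phi g = 𝟙 _ := by
  apply NatTrans.ext; funext m; refine ConcreteCategory.hom_ext _ _ fun x => ?_
  show (pushout.desc (descU g) (descV g) (desc_cond g)).app m (psiApp g m x) = x
  by_cases hz : x.1.2 ∈ Set.range (g.app m)
  · obtain ⟨w, hw⟩ := hz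
    rw [psiApp_mem g m x w hw,
      show (pushout.desc (descU g) (descV g) (desc_cond g)).app m
          ((poInr g).app m (x.1.1, w)) = (descV g).app m (x.1.1, w) from
        ConcreteCategory.congr_hom (NatTrans.congr_app (pushout.inr_desc (descU g) (descV g) (desc_cond g)) m)
          ((x.1.1, w) : J.obj m × W.obj m)]
    exact Subtype.ext (Prod.ext rfl hw)
  · rw [psiApp_not_mem g m x hz,
      show (pushout.desc (descU g) (descV g) (desc_cond g)).app m
          ((poInl g).app m (SSet.stdSimplex.const 0 0 m, x.1.2)) =
          (descU g).app m (SSet.stdSimplex.const 0 0 m, x.1.2) from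
        ConcreteCategory.congr_hom (NatTrans.congr_app (pushout.inl_desc (descU g) (descV g) (desc_cond g)) m) _]
    exact Subtype.ext (Prod.ext (funext fun i => (widened_false g x hz i).symm) rfl)

/-- The identification of `W_univ(Z)` with `J × Z`. -/
def wideUnivIso (Z : SSet.{0}) : sprod J Z ≅ (wideSub Z Set.univ).toSSet where
  hom :=
    { app := fun m => TypeCat.ofHom (fun p => ⟨p, fun _ _ => trivial⟩)
      naturality := fun _ _ _ => rfl }
  inv := (wideSub Z Set.univ).ι
  hom_inv_id := rfl
  inv_hom_id := by
    apply NatTrans.ext; funext m; refine ConcreteCategory.hom_ext _ _ fun x => ?_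
    exact Subtype.ext rfl

lemma ppJ0Mono_le_sat : ppJ0Mono ≤ satClosure Wide := by
  rintro X X' h ⟨W, Z, g, hg, hA⟩ T hT hle
  haveI := hT.respectsIso
  haveI := hg
  rw [T.arrow_mk_iso_iff (eqToIso hA)]
  haveI : IsIso (phi g) := ⟨⟨psi g, phi_psi g, psi_phi g⟩⟩
  rw [T.arrow_mk_iso_iff (Arrow.isoMk (T := SSet.{0}) (f := Arrow.mk (pp (ptJ false) g))
    (g := Arrow.mk (widenedIncl Z (rangeSub g) Set.univ)) (asIso (phi g)) (wideUnivIso Z) ?_)]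
  · exact hle _ ⟨Z, rangeSub g, Set.univ, rfl⟩
  · show phi g ≫ widenedIncl Z (rangeSub g) Set.univ = pp (ptJ false) g ≫ (wideUnivIso Z).hom
    apply pushout.hom_ext
    · simp only [← Category.assoc]
      rw [show poInl g ≫ phi g = descU g from pushout.inl_desc _ _ _, inl_pp]
      apply NatTrans.ext; funext m; refine ConcreteCategory.hom_ext _ _ fun p => ?_
      exact Subtype.ext rfl
    · simp only [← Category.assoc]
      rw [show poInr g ≫ phi g = descV g from pushout.inr_desc _ _ _, inr_pp]
      apply NatTrans.ext; funext m; refine ConcreteCategory.hom_ext _ _ fun p => ?_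
      exact Subtype.ext rfl
/-- The saturated closure of the class `Wide` of widened inclusions
equals the saturated closure of the class `({0} ↪ J) □ Mono`. -/
theorem satClosure_Wide_eq_satClosure_ppJ0Mono :
    satClosure Wide = satClosure ppJ0Mono := by
  exact le_antisymm (satClosure_le wide_le_sat) (satClosure_le ppJ0Mono_le_sat)

end Paper
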